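/- Let α_1,…,α_n be pairwise distinct elements of a finite field F_q and let k, r be integers with 6 ≤ 2k ≤ n and 1 ≤ r ≤ k−1. Then G_{r,k} · H_{r,k}ᵀ = 0 and the rows of H_{r,k} are linearly independent over F_q; consequently H_{r,k} is a parity check matrix for the code C_{r,k}, i.e. the rows of H_{r,k} form a basis of the dual code C_{r,k}^⊥. -/

import Mathlib

open Finset Matrix

/-- Elementary symmetric polynomial `σ_t` evaluated at the values `x 0, …, x (m-1)`. -/
def esymmV {F : Type*} [CommRing F] {m : ℕ} (t : ℕ) (x : Fin m → F) : F :=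
  ∑ A ∈ Finset.univ.powersetCard t, ∏ i ∈ A, x i

/-- Complete homogeneous symmetric polynomial `S_t` evaluated at `x 0, …, x (m-1)`. -/
def hsymmV {F : Type*} [CommRing F] {m : ℕ} (t : ℕ) (x : Fin m → F) : F :=
  ∑ d ∈ Finset.Nat.antidiagonalTuple m t, ∏ i, x i ^ d i

/-- The exponent of the `i`-th row (0-indexed): the elements of
`{0,…,k−r−1} ∪ {k−r+1,…,k}` in increasing order. -/
def expo (k r : ℕ) (i : Fin k) : ℕ := if (i : ℕ) < k - r then (i : ℕ) else (i : ℕ) + 1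

/-- The Vandermonde product `∏_{i<j} (α_j − α_i)`. -/
def vand {F : Type*} [CommRing F] {n : ℕ} (α : Fin n → F) : F :=
  ∏ i : Fin n, ∏ j ∈ Finset.Ioi i, (α j - α i)

/-- The matrix `G_{r,k}`: rows are `(α_1^e, …, α_n^e)` for
`e ∈ {0,…,k−r−1} ∪ {k−r+1,…,k}` in increasing order. -/
def Grk {F : Type*} [Field F] {n : ℕ} (α : Fin n → F) (k r : ℕ) : Matrix (Fin k) (Fin n) F :=
  Matrix.of fun i j => α j ^ expo k r i

/-- The matrix `G_1`: `G_{r,k}` with the extra column `(0,…,0,1)ᵀ` appended. -/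
def G1 {F : Type*} [Field F] {n : ℕ} (α : Fin n → F) (k r : ℕ) :
    Matrix (Fin k) (Fin (n + 1)) F :=
  Matrix.of fun i j =>
    if hj : (j : ℕ) < n then α ⟨j, hj⟩ ^ expo k r i
    else if (i : ℕ) = k - 1 then 1 else 0

/-- The matrix `G_2`: `G_1` with the extra column `(0,…,0,1,δ)ᵀ` appended
(entry `1` in row `k−1`, i.e. index `k−2`, and `δ` in row `k`, i.e. index `k−1`). -/
def G2 {F : Type*} [Field F] {n : ℕ} (α : Fin n → F) (k r : ℕ) (δ : F) :
    Matrix (Fin k) (Fin (n + 2)) F :=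
  Matrix.of fun i j =>
    if hj : (j : ℕ) < n then α ⟨j, hj⟩ ^ expo k r i
    else if (j : ℕ) = n then (if (i : ℕ) = k - 1 then 1 else 0)
    else (if (i : ℕ) = k - 2 then 1 else if (i : ℕ) = k - 1 then δ else 0)

/-- `u_i = ∏_{j ≠ i} (α_i − α_j)⁻¹`. -/
def uCoef {F : Type*} [Field F] {n : ℕ} (α : Fin n → F) (i : Fin n) : F :=
  ∏ j ∈ Finset.univ.erase i, (α i - α j)⁻¹

/-- `Λ_{r,i} = ∑_{j=0}^{r} (−1)^j σ_j α_i^{(n−k)+(r−1)−j}`. -/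
def Lam {F : Type*} [Field F] {n : ℕ} (α : Fin n → F) (k r : ℕ) (i : Fin n) : F :=
  ∑ j ∈ Finset.range (r + 1), (-1 : F) ^ j * esymmV j α * α i ^ ((n - k) + (r - 1) - j)

/-- Every `k×k` submatrix of `G` is nonsingular. -/
def allSubNonsing {F : Type*} [Field F] {k m : ℕ} (G : Matrix (Fin k) (Fin m) F) : Prop :=
  ∀ c : Fin k → Fin m, Function.Injective c → (G.submatrix id c).det ≠ 0

/-- The linear code spanned by the rows of `G`. -/
def rowSpan {F : Type*} [Field F] {k m : ℕ} (G : Matrix (Fin k) (Fin m) F) :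
    Submodule F (Fin m → F) :=
  Submodule.span F (Set.range fun i => G i)

/-- The dual code `C^⊥ = {x : ∑ x_i c_i = 0 for all c ∈ C}`, as a set. -/
def dualSet {F : Type*} [Field F] {m : ℕ} (C : Set (Fin m → F)) : Set (Fin m → F) :=
  {x | ∀ c ∈ C, ∑ i, x i * c i = 0}

/-- The extended code of `C` with respect to `w`. -/
def extCode {F : Type*} [Field F] {m : ℕ} (C : Set (Fin m → F)) (w : Fin m → F) :
    Set (Fin (m + 1) → F) :=
  {y | ∃ c ∈ C, (∀ i : Fin m, y (Fin.castSucc i) = c i) ∧ y (Fin.last m) = ∑ i, w i * c i}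

/-- The parity check matrix `H_{r,k}`: the first `n−k−1` rows are
`(u_1 α_1^e, …, u_n α_n^e)` for `e = 0,…,n−k−2` and the last row is
`(u_1 Λ_{r,1}, …, u_n Λ_{r,n})`. -/
def Hrk {F : Type*} [Field F] {n : ℕ} (α : Fin n → F) (k r : ℕ) :
    Matrix (Fin (n - k)) (Fin n) F :=
  Matrix.of fun i j =>
    if (i : ℕ) < n - k - 1 then uCoef α j * α j ^ (i : ℕ)
    else uCoef α j * Lam α k r j

/-- The parity check matrix `H_1`. -/
def H1 {F : Type*} [Field F] {n : ℕ} (α : Fin n → F) (k r : ℕ) :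
    Matrix (Fin (n - k + 1)) (Fin (n + 1)) F :=
  Matrix.of fun i j =>
    if hj : (j : ℕ) < n then
      (if (i : ℕ) < n - k - 1 then uCoef α ⟨j, hj⟩ * α ⟨j, hj⟩ ^ (i : ℕ)
       else if (i : ℕ) = n - k - 1 then uCoef α ⟨j, hj⟩ * Lam α k r ⟨j, hj⟩
       else uCoef α ⟨j, hj⟩ * α ⟨j, hj⟩ ^ (n - k - 1))
    else (if (i : ℕ) = n - k then -1 else 0)

/-- The parity check matrix `H_2` (case `2 ≤ r`), with parameter `b`. -/
def H2 {F : Type*} [Field F] {n : ℕ} (α : Fin n → F) (k r : ℕ) (b : F) :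
    Matrix (Fin (n - k + 2)) (Fin (n + 2)) F :=
  Matrix.of fun i j =>
    if hj : (j : ℕ) < n then
      (if (i : ℕ) < n - k - 1 then uCoef α ⟨j, hj⟩ * α ⟨j, hj⟩ ^ (i : ℕ)
       else if (i : ℕ) = n - k - 1 then uCoef α ⟨j, hj⟩ * Lam α k r ⟨j, hj⟩
       else if (i : ℕ) = n - k then uCoef α ⟨j, hj⟩ * α ⟨j, hj⟩ ^ (n - k - 1)
       else uCoef α ⟨j, hj⟩ * α ⟨j, hj⟩ ^ (n - k))
    else if (j : ℕ) = n then
      (if (i : ℕ) = n - k then -1 else if (i : ℕ) = n - k + 1 then b else 0)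
    else (if (i : ℕ) = n - k + 1 then -1 else 0)

section Aux
open Polynomial
variable {F : Type*} [Field F] {n : ℕ}

lemma sub_ne' (α : Fin n → F) (hα : Function.Injective α) {i j : Fin n} (h : j ≠ i) :
    α i - α j ≠ 0 := sub_ne_zero.mpr fun he => h (hα he.symm)

lemma uCoef_ne_zero (α : Fin n → F) (hα : Function.Injective α) (i : Fin n) :
    uCoef α i ≠ 0 := by
  refine Finset.prod_ne_zero_iff.mpr fun j hj => ?_
  exact inv_ne_zero (sub_ne' α hα (Finset.ne_of_mem_erase hj))

lemma uCoef_mul_prod (α : Fin n → F) (hα : Function.Injective α) (i : Fin n) :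
    uCoef α i * ∏ j ∈ Finset.univ.erase i, (α i - α j) = 1 := by
  rw [uCoef, ← Finset.prod_mul_distrib]
  exact Finset.prod_eq_one fun j hj =>
    inv_mul_cancel₀ (sub_ne' α hα (Finset.ne_of_mem_erase hj))

/-- `S_e = ∑_j u_j α_j^e`. -/
noncomputable def Sval (α : Fin n → F) (e : ℕ) : F := ∑ j, uCoef α j * α j ^ e

open Polynomial in
lemma Sval_eq (α : Fin n → F) (hα : Function.Injective α) (hn : 1 ≤ n) {e : ℕ}
    (he : e ≤ n - 1) : Sval α e = if e = n - 1 then 1 else 0 := by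
  classical
  set N : Fin n → F[X] := fun i => ∏ j ∈ Finset.univ.erase i, (X - C (α j)) with hN
  have hNmonic : ∀ i, (N i).Monic := fun i => monic_prod_of_monic _ _ fun j _ => monic_X_sub_C _
  have hNdeg : ∀ i, (N i).natDegree = n - 1 := by
    intro i
    rw [hN, natDegree_prod _ _ (fun j _ => X_sub_C_ne_zero _)]
    simp [Finset.card_erase_of_mem]
  set P : F[X] := ∑ i, C (uCoef α i * α i ^ e) * N i with hP
  have hPeval : ∀ m, P.eval (α m) = α m ^ e := by
    intro m
    rw [hP, eval_finset_sum]
    rw [Finset.sum_eq_single m]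
    · simp only [eval_mul, eval_C, hN, eval_prod, eval_sub, eval_X, eval_C]
      rw [mul_comm (uCoef α m), mul_assoc, uCoef_mul_prod α hα, mul_one]
    · intro i _ him
      have : (N i).eval (α m) = 0 := by
        rw [hN, eval_prod]
        exact Finset.prod_eq_zero (Finset.mem_erase.mpr ⟨him.symm, Finset.mem_univ m⟩)
          (by simp)
      simp [this]
    · simp
  have hPdeg : P.natDegree ≤ n - 1 := by
    refine (natDegree_sum_le _ _).trans ?_
    rw [Finset.fold_max_le]
    exact ⟨Nat.zero_le _, fun i _ => (natDegree_C_mul_le _ _).trans (hNdeg i).le⟩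
  have hzero : P - X ^ e = 0 := by
    apply eq_zero_of_natDegree_lt_card_of_eval_eq_zero _ hα
    · intro m; simp [hPeval m]
    · rw [Fintype.card_fin]
      calc (P - X ^ e).natDegree ≤ max P.natDegree (X ^ e : F[X]).natDegree :=
            natDegree_sub_le _ _
        _ ≤ n - 1 := by
            refine max_le hPdeg ?_
            simpa using he
        _ < n := by omega
  have hPX : P = X ^ e := sub_eq_zero.mp hzero
  have hc : P.coeff (n - 1) = Sval α e := by
    rw [hP, finset_sum_coeff]
    refine Finset.sum_congr rfl fun i _ => ?_
    rw [coeff_C_mul, ← hNdeg i, (hNmonic i).coeff_natDegree, mul_one]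
  rw [← hc, hPX, coeff_X_pow]
  simp [eq_comm]

open Polynomial in
lemma vieta_eval (α : Fin n → F) (x : F) :
    ∑ t ∈ Finset.range (n + 1), (-1 : F) ^ t * esymmV t α * x ^ (n - t)
      = ∏ i, (x - α i) := by
  classical
  have hP : (∏ i, (X - C (α i)) : F[X]) =
      ((Finset.univ.val.map α).map fun t => X - C t).prod := by
    rw [Multiset.map_map, Finset.prod]
    rfl
  have hdeg : (∏ i, (X - C (α i)) : F[X]).natDegree = n := by
    rw [natDegree_prod _ _ (fun j _ => X_sub_C_ne_zero _)]
    simp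
  have hcard : Multiset.card (Finset.univ.val.map α) = n := by simp
  have hcoeff : ∀ m ≤ n, (∏ i, (X - C (α i)) : F[X]).coeff m
      = (-1 : F) ^ (n - m) * esymmV (n - m) α := by
    intro m hm
    rw [hP, Multiset.prod_X_sub_C_coeff _ (by rw [hcard]; exact hm), hcard, esymmV,
      ← Finset.esymm_map_val]
  have heval : (∏ i, (X - C (α i)) : F[X]).eval x = ∏ i, (x - α i) := by
    simp [eval_prod]
  rw [← heval, eval_eq_sum_range, hdeg]
  conv_rhs => rw [← Finset.sum_range_reflect]
  refine Finset.sum_congr rfl fun t ht => ?_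
  rw [Finset.mem_range] at ht
  have h1 : n + 1 - 1 - t = n - t := by omega
  rw [h1, hcoeff (n - t) (by omega)]
  have h2 : n - (n - t) = t := by omega
  rw [h2]

lemma Sval_shift (α : Fin n → F) (s : ℕ) :
    ∑ t ∈ Finset.range (n + 1), (-1 : F) ^ t * esymmV t α * Sval α (n + s - t) = 0 := by
  classical
  have : ∀ t ∈ Finset.range (n + 1), (-1 : F) ^ t * esymmV t α * Sval α (n + s - t)
      = ∑ j, uCoef α j * α j ^ s * ((-1 : F) ^ t * esymmV t α * α j ^ (n - t)) := by
    intro t ht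
    rw [Finset.mem_range] at ht
    rw [Sval, Finset.mul_sum]
    refine Finset.sum_congr rfl fun j _ => ?_
    have : n + s - t = s + (n - t) := by omega
    rw [this, pow_add]
    ring
  rw [Finset.sum_congr rfl this, Finset.sum_comm]
  refine Finset.sum_eq_zero fun j _ => ?_
  rw [← Finset.mul_sum, vieta_eval α (α j)]
  have hz : (∏ i, (α j - α i)) = 0 := Finset.prod_eq_zero (Finset.mem_univ j) (sub_self _)
  rw [hz, mul_zero]

lemma LamS (α : Fin n → F) (hα : Function.Injective α) (hn : 2 ≤ n) {r s : ℕ}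
    (hsr : s + 1 ≤ r) (hrn : r + 1 ≤ n) :
    ∑ t ∈ Finset.range (r + 1), (-1 : F) ^ t * esymmV t α * Sval α (n + s - t) = 0 := by
  rw [← Sval_shift α s]
  refine Finset.sum_subset (Finset.range_subset_range.mpr (by omega)) ?_
  intro t ht ht'
  rw [Finset.mem_range] at ht; rw [Finset.mem_range, not_lt] at ht'
  have : Sval α (n + s - t) = 0 := by
    rw [Sval_eq α hα (by omega) (by omega)]
    rw [if_neg (by omega)]
  rw [this, mul_zero]


lemma lamSum (α : Fin n → F) (k r : ℕ) (m : ℕ) :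
    ∑ j, α j ^ m * (uCoef α j * Lam α k r j)
      = ∑ t ∈ Finset.range (r + 1),
          (-1 : F) ^ t * esymmV t α * Sval α (m + ((n - k) + (r - 1) - t)) := by
  have : ∀ j, α j ^ m * (uCoef α j * Lam α k r j)
      = ∑ t ∈ Finset.range (r + 1),
          (-1 : F) ^ t * esymmV t α * (uCoef α j * α j ^ (m + ((n - k) + (r - 1) - t))) := by
    intro j
    rw [Lam, Finset.mul_sum, Finset.mul_sum]
    refine Finset.sum_congr rfl fun t _ => ?_
    rw [pow_add]
    ring
  rw [Finset.sum_congr rfl fun j _ => this j, Finset.sum_comm]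
  refine Finset.sum_congr rfl fun t _ => ?_
  rw [Sval, Finset.mul_sum]

lemma GH_zero (α : Fin n → F) (hα : Function.Injective α) (k r : ℕ)
    (h6 : 6 ≤ 2 * k) (hkn : 2 * k ≤ n) (hr1 : 1 ≤ r) (hrk : r ≤ k - 1) :
    Grk α k r * (Hrk α k r)ᵀ = 0 := by
  have hk3 : 3 ≤ k := by omega
  have hrk' : r + 1 ≤ k := by omega
  ext a b
  rw [Matrix.mul_apply, Matrix.zero_apply]
  have hG : ∀ j, Grk α k r a j = α j ^ expo k r a := fun j => rfl
  have hea : expo k r a ≤ k := by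
    rw [expo]; split <;> [omega; exact Nat.succ_le_of_lt a.isLt]
  by_cases hb : (b : ℕ) < n - k - 1
  · have : ∀ j, Grk α k r a j * (Hrk α k r)ᵀ j b
        = uCoef α j * α j ^ (expo k r a + (b : ℕ)) := by
      intro j
      rw [Matrix.transpose_apply, Hrk, Matrix.of_apply, if_pos hb, hG, pow_add]
      ring
    rw [Finset.sum_congr rfl fun j _ => this j, ← Sval,
      Sval_eq α hα (by omega) (by omega), if_neg (by omega)]
  · have : ∀ j, Grk α k r a j * (Hrk α k r)ᵀ j b
        = α j ^ expo k r a * (uCoef α j * Lam α k r j) := by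
      intro j
      rw [Matrix.transpose_apply, Hrk, Matrix.of_apply, if_neg hb, hG]
    rw [Finset.sum_congr rfl fun j _ => this j, lamSum]
    by_cases ha : (a : ℕ) < k - r
    · refine Finset.sum_eq_zero fun t ht => ?_
      rw [Finset.mem_range] at ht
      have hexp : expo k r a + ((n - k) + (r - 1) - t) ≤ n - 1 ∧
          expo k r a + ((n - k) + (r - 1) - t) ≠ n - 1 := by
        rw [expo, if_pos ha]
        omega
      rw [Sval_eq α hα (by omega) hexp.1, if_neg hexp.2, mul_zero]
    · have hak : k - r ≤ (a : ℕ) := le_of_not_gt ha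
      have hal : (a : ℕ) ≤ k - 1 := by omega
      have he : ∀ t ∈ Finset.range (r + 1),
          expo k r a + ((n - k) + (r - 1) - t) = n + ((a : ℕ) - (k - r)) - t := by
        intro t ht
        rw [Finset.mem_range] at ht
        rw [expo, if_neg ha]
        omega
      rw [Finset.sum_congr rfl fun t ht => by rw [he t ht]]
      exact LamS α hα (by omega) (by omega) (by omega)


open Polynomial

lemma esymmV_zero {m : ℕ} (x : Fin m → F) : esymmV 0 x = 1 := by
  simp [esymmV]

/-- The polynomial whose evaluation at `α j` is `Lam α k r j`. -/
noncomputable def Lpoly (α : Fin n → F) (k r : ℕ) : F[X] :=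
  ∑ t ∈ Finset.range (r + 1), C ((-1 : F) ^ t * esymmV t α) * X ^ ((n - k) + (r - 1) - t)

lemma Lpoly_eval (α : Fin n → F) (k r : ℕ) (j : Fin n) :
    (Lpoly α k r).eval (α j) = Lam α k r j := by
  rw [Lpoly, eval_finset_sum, Lam]
  refine Finset.sum_congr rfl fun t _ => ?_
  rw [eval_mul, eval_C, eval_pow, eval_X]

lemma Lpoly_natDegree_le (α : Fin n → F) (k r : ℕ) :
    (Lpoly α k r).natDegree ≤ (n - k) + (r - 1) := by
  refine (natDegree_sum_le _ _).trans ?_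
  rw [Finset.fold_max_le]
  refine ⟨Nat.zero_le _, fun t _ => ?_⟩
  exact (natDegree_C_mul_le _ _).trans ((natDegree_X_pow _).le.trans (by omega))

lemma Lpoly_coeff_low (α : Fin n → F) (k r : ℕ) (hr1 : 1 ≤ r) {m : ℕ}
    (hm : m < n - k - 1) : (Lpoly α k r).coeff m = 0 := by
  rw [Lpoly, finset_sum_coeff]
  refine Finset.sum_eq_zero fun t ht => ?_
  rw [Finset.mem_range] at ht
  rw [coeff_C_mul, coeff_X_pow, if_neg (by omega), mul_zero]

lemma Lpoly_coeff_top (α : Fin n → F) (k r : ℕ) (hr1 : 1 ≤ r) (hkn : k + 1 ≤ n) :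
    (Lpoly α k r).coeff ((n - k) + (r - 1)) = 1 := by
  rw [Lpoly, finset_sum_coeff]
  rw [Finset.sum_eq_single 0]
  · rw [coeff_C_mul, coeff_X_pow, if_pos (by omega), pow_zero, esymmV_zero]
    ring
  · intro t ht htne
    rw [Finset.mem_range] at ht
    rw [coeff_C_mul, coeff_X_pow, if_neg (by omega), mul_zero]
  · simp

lemma H_rows_li (α : Fin n → F) (hα : Function.Injective α) (k r : ℕ)
    (h6 : 6 ≤ 2 * k) (hkn : 2 * k ≤ n) (hr1 : 1 ≤ r) (hrk : r ≤ k - 1) :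
    LinearIndependent F (fun i => Hrk α k r i) := by
  have hk3 : 3 ≤ k := by omega
  rw [Fintype.linearIndependent_iff]
  intro g hg i
  set Q : F[X] := ∑ i : Fin (n - k), C (g i) *
      (if (i : ℕ) < n - k - 1 then X ^ (i : ℕ) else Lpoly α k r) with hQ
  have hQeval : ∀ j, Q.eval (α j) = ∑ i, g i * (if (i : ℕ) < n - k - 1
      then α j ^ (i : ℕ) else Lam α k r j) := by
    intro j
    rw [hQ, eval_finset_sum]
    refine Finset.sum_congr rfl fun i _ => ?_
    rw [eval_mul, eval_C]
    congr 1
    split <;> simp [Lpoly_eval]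
  have hQzero : Q = 0 := by
    apply eq_zero_of_natDegree_lt_card_of_eval_eq_zero _ hα
    · intro j
      have hj := congrFun hg j
      simp only [Finset.sum_apply, Pi.smul_apply, smul_eq_mul, Pi.zero_apply] at hj
      have : ∑ i, g i * Hrk α k r i j = 0 := hj
      have hfac : ∑ i, g i * Hrk α k r i j = uCoef α j * Q.eval (α j) := by
        rw [hQeval, Finset.mul_sum]
        refine Finset.sum_congr rfl fun i _ => ?_
        rw [Hrk, Matrix.of_apply]
        split <;> ring
      rw [hfac] at this
      exact (mul_eq_zero.mp this).resolve_left (uCoef_ne_zero α hα j)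
    · rw [Fintype.card_fin]
      refine lt_of_le_of_lt (natDegree_sum_le _ _) ?_
      rw [Finset.fold_max_lt]
      refine ⟨by omega, fun i _ => ?_⟩
      refine lt_of_le_of_lt (natDegree_C_mul_le _ _) ?_
      split
      · exact lt_of_le_of_lt (natDegree_X_pow _).le (by omega)
      · exact lt_of_le_of_lt (Lpoly_natDegree_le α k r) (by omega)
  have hcoeff : ∀ m, Q.coeff m = 0 := fun m => by rw [hQzero, coeff_zero]
  by_cases hi : (i : ℕ) < n - k - 1
  · have := hcoeff (i : ℕ)
    rw [hQ, finset_sum_coeff] at this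
    rw [Finset.sum_eq_single i] at this
    · rwa [coeff_C_mul, if_pos hi, coeff_X_pow, if_pos rfl, mul_one] at this
    · intro i' _ hne
      rw [coeff_C_mul]
      split
      · rw [coeff_X_pow, if_neg (fun h => hne (Fin.ext h.symm)), mul_zero]
      · rw [Lpoly_coeff_low α k r hr1 hi, mul_zero]
    · simp
  · have hieq : (i : ℕ) = n - k - 1 := by omega
    have := hcoeff ((n - k) + (r - 1))
    rw [hQ, finset_sum_coeff] at this
    rw [Finset.sum_eq_single i] at this
    · rwa [coeff_C_mul, if_neg hi, Lpoly_coeff_top α k r hr1 (by omega), mul_one] at this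
    · intro i' _ hne
      rw [coeff_C_mul]
      split
      · rw [coeff_X_pow, if_neg (by omega), mul_zero]
      · have : (i' : ℕ) = n - k - 1 := by omega
        exact absurd (Fin.ext (this.trans hieq.symm)) hne
    · simp


lemma expo_inj (k r : ℕ) : Function.Injective (expo k r) := by
  intro i1 i2 h
  rw [expo, expo] at h
  ext
  split at h <;> split at h <;> omega

lemma G_rows_li (α : Fin n → F) (hα : Function.Injective α) (k r : ℕ)
    (h6 : 6 ≤ 2 * k) (hkn : 2 * k ≤ n) :
    LinearIndependent F (fun i => Grk α k r i) := by
  have hk3 : 3 ≤ k := by omega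
  rw [Fintype.linearIndependent_iff]
  intro g hg i
  set Q : F[X] := ∑ i : Fin k, C (g i) * X ^ (expo k r i) with hQ
  have hea : ∀ i : Fin k, expo k r i ≤ k := by
    intro i; rw [expo]; split <;> [omega; exact Nat.succ_le_of_lt i.isLt]
  have hQzero : Q = 0 := by
    apply eq_zero_of_natDegree_lt_card_of_eval_eq_zero _ hα
    · intro j
      have hj := congrFun hg j
      simp only [Finset.sum_apply, Pi.smul_apply, smul_eq_mul, Pi.zero_apply] at hj
      rw [hQ, eval_finset_sum]
      rw [← hj]
      refine Finset.sum_congr rfl fun i _ => ?_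
      rw [eval_mul, eval_C, eval_pow, eval_X]
      rfl
    · rw [Fintype.card_fin]
      refine lt_of_le_of_lt (natDegree_sum_le _ _) ?_
      rw [Finset.fold_max_lt]
      refine ⟨by omega, fun i _ => ?_⟩
      refine lt_of_le_of_lt (natDegree_C_mul_le _ _) ?_
      exact lt_of_le_of_lt (natDegree_X_pow _).le (by have := hea i; omega)
  have := congrArg (fun p => Polynomial.coeff p (expo k r i)) hQzero
  simp only [hQ, finset_sum_coeff, coeff_zero] at this
  rw [Finset.sum_eq_single i] at this
  · rwa [coeff_C_mul, coeff_X_pow, if_pos rfl, mul_one] at this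
  · intro i' _ hne
    rw [coeff_C_mul, coeff_X_pow,
      if_neg (fun h => hne (expo_inj k r h.symm)), mul_zero]
  · simp

lemma span_eq_dual (α : Fin n → F) (hα : Function.Injective α) (k r : ℕ)
    (h6 : 6 ≤ 2 * k) (hkn : 2 * k ≤ n) (hr1 : 1 ≤ r) (hrk : r ≤ k - 1) :
    (rowSpan (Hrk α k r) : Set (Fin n → F))
      = dualSet (rowSpan (Grk α k r) : Set (Fin n → F)) := by
  set W := LinearMap.ker (Grk α k r).mulVecLin with hW
  have hdual : dualSet (rowSpan (Grk α k r) : Set (Fin n → F)) = (W : Set (Fin n → F)) := by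
    ext x
    constructor
    · intro hx
      have : ∀ a, (Grk α k r).mulVec x a = 0 := by
        intro a
        have := hx (Grk α k r a) (Submodule.subset_span ⟨a, rfl⟩)
        rw [Matrix.mulVec, dotProduct]
        rw [← this]
        exact Finset.sum_congr rfl fun j _ => mul_comm _ _
      exact funext this
    · intro hx c hc
      have hx' : (Grk α k r).mulVec x = 0 := hx
      induction hc using Submodule.span_induction with
      | mem c hcm =>
        obtain ⟨a, rfl⟩ := hcm
        have h := congrFun hx' a
        rw [Matrix.mulVec, dotProduct] at h
        simp only [Pi.zero_apply] at h
        calc ∑ i, x i * (fun i => Grk α k r i) a i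
            = ∑ i, Grk α k r a i * x i := Finset.sum_congr rfl fun j _ => mul_comm _ _
          _ = 0 := h
      | zero => simp
      | add c d _ _ hc hd => simp [mul_add, Finset.sum_add_distrib, hc, hd]
      | smul t c _ hc =>
        calc ∑ i, x i * (t • c) i = t * ∑ i, x i * c i := by
              rw [Finset.mul_sum]
              exact Finset.sum_congr rfl fun i _ => by
                simp only [Pi.smul_apply, smul_eq_mul]; ring
          _ = 0 := by rw [hc, mul_zero]
  have hle : rowSpan (Hrk α k r) ≤ W := by
    rw [rowSpan, Submodule.span_le]
    rintro _ ⟨b, rfl⟩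
    have : (Grk α k r).mulVec (Hrk α k r b) = 0 := by
      funext a
      have h0 := congrFun (congrFun (GH_zero α hα k r h6 hkn hr1 hrk) a) b
      rw [Matrix.mul_apply] at h0
      simp only [Matrix.zero_apply] at h0
      simp only [Matrix.mulVec, dotProduct, Pi.zero_apply]
      rw [← h0]
      exact Finset.sum_congr rfl fun j _ => by rw [Matrix.transpose_apply]
    exact this
  have hfinH : Module.finrank F (rowSpan (Hrk α k r)) = n - k := by
    rw [rowSpan, finrank_span_eq_card (H_rows_li α hα k r h6 hkn hr1 hrk), Fintype.card_fin]
  have hrankG : Matrix.rank (Grk α k r) = k := by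
    rw [← Matrix.rank_transpose, Matrix.rank_eq_finrank_span_cols]
    show Module.finrank F (Submodule.span F (Set.range fun i => Grk α k r i)) = k
    rw [finrank_span_eq_card (G_rows_li α hα k r h6 hkn), Fintype.card_fin]
  have hfinW : Module.finrank F W = n - k := by
    have h1 := LinearMap.finrank_range_add_finrank_ker (Grk α k r).mulVecLin
    rw [Module.finrank_pi, Fintype.card_fin] at h1
    have h2 : Module.finrank F (LinearMap.range (Grk α k r).mulVecLin) = k := hrankG
    rw [h2] at h1
    rw [hW]
    omega
  have : rowSpan (Hrk α k r) = W :=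
    Submodule.eq_of_le_of_finrank_eq hle (by rw [hfinH, hfinW])
  rw [hdual, this]

end Aux

/-- Theorem 3.3: `H_{r,k}` is a parity check matrix for `C_{r,k}`. -/
theorem Hrk_parity_check {F : Type*} [Field F] [Fintype F] {n : ℕ}
    (α : Fin n → F) (hα : Function.Injective α) (k r : ℕ)
    (h6 : 6 ≤ 2 * k) (hkn : 2 * k ≤ n) (hr1 : 1 ≤ r) (hrk : r ≤ k - 1) :
    Grk α k r * (Hrk α k r)ᵀ = 0 ∧
    LinearIndependent F (fun i => Hrk α k r i) ∧
    (rowSpan (Hrk α k r) : Set (Fin n → F)) = dualSet (rowSpan (Grk α k r) : Set (Fin n → F)) := by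
  exact ⟨GH_zero α hα k r h6 hkn hr1 hrk, H_rows_li α hα k r h6 hkn hr1 hrk,
    span_eq_dual α hα k r h6 hkn hr1 hrk⟩
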